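/- arXiv:1104.0632 — 3 statements merged into one kernel-verified Lean document; each statement's English description precedes it below -/
import Mathlib

section
/- For the unit ball b_∞^M of ℓ^∞ in ℝ^M mapped into ℓ^1, the Kolmogorov n-width satisfies d_n(b_∞^M, ℓ_1^M) = M − n for 0 ≤ n ≤ M. -/
open scoped ENNReal NNReal

variable {m : ℕ}

local notation "E" m => EuclideanSpace ℝ (Fin m)

/-- augmentation step -/
lemma step_lemma (V : Submodule ℝ (EuclideanSpace ℝ (Fin m)))
    (y : EuclideanSpace ℝ (Fin m)) (hyV : y ∈ V) (hb : ∀ i, |y i| ≤ 1)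
    (hc : (Finset.univ.filter fun i => |y i| = 1).card < Module.finrank ℝ V) :
    ∃ y' ∈ V, (∀ i, |y' i| ≤ 1) ∧
      (Finset.univ.filter fun i => |y i| = 1).card <
        (Finset.univ.filter fun i => |y' i| = 1).card := by
  classical
  set S := (Finset.univ.filter fun i => |y i| = 1) with hS
  -- restriction to S
  let φ : V →ₗ[ℝ] (S → ℝ) :=
    { toFun := fun x => fun i => (x : EuclideanSpace ℝ (Fin m)) i.1
      map_add' := by intro a b; funext i; simp
      map_smul' := by intro c a; funext i; simp }
  have hker : 0 < Module.finrank ℝ (LinearMap.ker φ) := by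
    have h1 := LinearMap.finrank_range_add_finrank_ker φ
    have h2 : Module.finrank ℝ (LinearMap.range φ) ≤ S.card := by
      calc Module.finrank ℝ (LinearMap.range φ) ≤ Module.finrank ℝ (S → ℝ) :=
            Submodule.finrank_le _
        _ = S.card := by simp [Module.finrank_pi]
    omega
  haveI : Nontrivial (LinearMap.ker φ) := Module.finrank_pos_iff.mp hker
  obtain ⟨v, hv0⟩ := exists_ne (α := LinearMap.ker φ) (0 : LinearMap.ker φ)
  set w : EuclideanSpace ℝ (Fin m) := ((v : V) : EuclideanSpace ℝ (Fin m)) with hw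
  have hwV : w ∈ V := (v : V).2
  have hwS : ∀ i ∈ S, w i = 0 := by
    intro i hi
    have := v.2
    rw [LinearMap.mem_ker] at this
    have := congrFun this ⟨i, hi⟩
    exact this
  have hwne : w ≠ 0 := by
    intro h
    apply hv0
    ext1
    exact Subtype.ext h
  set T := (Finset.univ.filter fun i => w i ≠ 0) with hT
  have hTne : T.Nonempty := by
    by_contra h
    apply hwne
    ext i
    by_contra hi
    exact h ⟨i, by simp only [hT, Finset.mem_filter, Finset.mem_univ, true_and]; simpa using hi⟩
  set t : Fin m → ℝ := fun i => if 0 < w i then (1 - y i)/(w i) else (-1 - y i)/(w i) with ht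
  have htpos : ∀ i ∈ T, 0 < t i := by
    intro i hi
    have hwi : w i ≠ 0 := by simpa [hT] using hi
    have hiS : i ∉ S := fun h => hwi (hwS i h)
    have hlt : |y i| < 1 := lt_of_le_of_ne (hb i) (by simpa [hS] using hiS)
    rw [abs_lt] at hlt
    rcases hwi.lt_or_gt with h | h
    · simp only [ht, if_neg (not_lt.2 h.le)]
      exact div_pos_of_neg_of_neg (by linarith) h
    · simp only [ht, if_pos h]
      exact div_pos (by linarith) h
  set t0 := T.inf' hTne t with ht0
  have ht0pos : 0 < t0 := by
    rw [ht0, Finset.lt_inf'_iff]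
    exact htpos
  refine ⟨y + t0 • w, V.add_mem hyV (V.smul_mem _ hwV), ?_, ?_⟩
  · intro i
    have happ : (y + t0 • w) i = y i + t0 * w i := by
      simp [PiLp.add_apply, PiLp.smul_apply, smul_eq_mul]
    rw [happ]
    rcases lt_trichotomy (w i) 0 with h | h | h
    · have hiT : i ∈ T := by simp [hT, h.ne]
      have h1 : t0 ≤ t i := Finset.inf'_le t hiT
      have h2 : t i = (-1 - y i)/(w i) := by simp [ht, not_lt.2 h.le]
      have h3 : t0 * w i ≥ -1 - y i := by
        have := mul_le_mul_of_nonpos_right h1 h.le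
        rw [h2, div_mul_cancel₀ _ h.ne] at this
        linarith
      have h4 : t0 * w i ≤ 0 := mul_nonpos_of_nonneg_of_nonpos ht0pos.le h.le
      have := hb i; rw [abs_le] at this ⊢
      constructor <;> nlinarith
    · simpa [h] using hb i
    · have hiT : i ∈ T := by simp [hT, h.ne']
      have h1 : t0 ≤ t i := Finset.inf'_le t hiT
      have h2 : t i = (1 - y i)/(w i) := by simp [ht, h]
      have h3 : t0 * w i ≤ 1 - y i := by
        rw [h2] at h1
        exact (le_div_iff₀ h).mp h1
      have h4 : 0 ≤ t0 * w i := mul_nonneg ht0pos.le h.le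
      have := hb i; rw [abs_le] at this ⊢
      constructor <;> nlinarith
  · apply Finset.card_lt_card
    obtain ⟨i0, hi0T, hi0⟩ := Finset.exists_mem_eq_inf' hTne t
    have hsub : S ⊆ (Finset.univ.filter fun i => |(y + t0 • w) i| = 1) := by
      intro i hi
      have happ : (y + t0 • w) i = y i + t0 * w i := by
        simp [PiLp.add_apply, PiLp.smul_apply, smul_eq_mul]
      simp only [Finset.mem_filter, Finset.mem_univ, true_and, happ, hwS i hi]
      simpa [hS] using hi
    refine Finset.ssubset_iff_of_subset hsub |>.mpr ⟨i0, ?_, ?_⟩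
    · have hwi : w i0 ≠ 0 := by simpa [hT] using hi0T
      have happ : (y + t0 • w) i0 = y i0 + t0 * w i0 := by
        simp [PiLp.add_apply, PiLp.smul_apply, smul_eq_mul]
      simp only [Finset.mem_filter, Finset.mem_univ, true_and, happ]
      rcases hwi.lt_or_gt with h | h
      · have h2 : t i0 = (-1 - y i0)/(w i0) := by simp [ht, not_lt.2 h.le]
        rw [← ht0] at hi0
        rw [hi0, h2, div_mul_cancel₀ _ h.ne]
        norm_num
      · have h2 : t i0 = (1 - y i0)/(w i0) := by simp [ht, h]
        rw [← ht0] at hi0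
        rw [hi0, h2, div_mul_cancel₀ _ h.ne']
        norm_num
    · intro hiS
      have hwi : w i0 ≠ 0 := by simpa [hT] using hi0T
      exact hwi (hwS i0 hiS)

lemma exists_aux (V : Submodule ℝ (EuclideanSpace ℝ (Fin m))) (k : ℕ) :
    ∀ y ∈ V, (∀ i, |y i| ≤ 1) →
      Module.finrank ℝ V ≤ (Finset.univ.filter fun i => |y i| = 1).card + k →
      ∃ y' ∈ V, (∀ i, |y' i| ≤ 1) ∧
        Module.finrank ℝ V ≤ (Finset.univ.filter fun i => |y' i| = 1).card := by
  induction k with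
  | zero => intro y hy hb hk; exact ⟨y, hy, hb, by simpa using hk⟩
  | succ k ih =>
    intro y hy hb hk
    by_cases h : Module.finrank ℝ V ≤ (Finset.univ.filter fun i => |y i| = 1).card
    · exact ⟨y, hy, hb, h⟩
    · obtain ⟨y'', hy'', hb'', hc''⟩ := step_lemma V y hy hb (by omega)
      exact ih y'' hy'' hb'' (by omega)

lemma exists_max_vec (V : Submodule ℝ (EuclideanSpace ℝ (Fin m))) :
    ∃ y ∈ V, (∀ i, |y i| ≤ 1) ∧
      Module.finrank ℝ V ≤ (Finset.univ.filter fun i => |y i| = 1).card := by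
  apply exists_aux V (Module.finrank ℝ V) 0 V.zero_mem
  · intro i
    simp only [PiLp.zero_apply, abs_zero]
    norm_num
  · omega

lemma lower_bound (M n : ℕ) (hn : n ≤ M)
    (Z : Submodule ℝ (PiLp 1 (fun _ : Fin M => ℝ)))
    (hZ : Module.rank ℝ Z ≤ (n : Cardinal)) :
    ∃ x : PiLp 1 (fun _ : Fin M => ℝ), (∀ i, |x i| ≤ 1) ∧
      ∀ z ∈ Z, ((M - n : ℕ) : ℝ≥0∞) ≤ edist x z := by
  classical
  set e : PiLp 1 (fun _ : Fin M => ℝ) ≃ₗ[ℝ] EuclideanSpace ℝ (Fin M) :=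
    (WithLp.linearEquiv 1 ℝ (Fin M → ℝ)).trans
      (WithLp.linearEquiv 2 ℝ (Fin M → ℝ)).symm with he
  set Z' : Submodule ℝ (EuclideanSpace ℝ (Fin M)) := Z.map (e : PiLp 1 (fun _ : Fin M => ℝ) →ₗ[ℝ] EuclideanSpace ℝ (Fin M)) with hZ'
  have hfr : Module.finrank ℝ Z ≤ n := by
    have h1 := Module.finrank_eq_rank ℝ Z
    rw [← h1] at hZ
    exact_mod_cast hZ
  have hfr' : Module.finrank ℝ Z' ≤ n := by
    rw [hZ']
    exact (LinearEquiv.finrank_map_eq e Z).trans_le hfr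
  have hortho : (M - n : ℕ) ≤ Module.finrank ℝ Z'ᗮ := by
    have := Submodule.finrank_add_finrank_orthogonal Z'
    have hM : Module.finrank ℝ (EuclideanSpace ℝ (Fin M)) = M := by
      simp [finrank_euclideanSpace]
    omega
  obtain ⟨y, hyV, hyb, hyc⟩ := exists_max_vec Z'ᗮ
  set x : PiLp 1 (fun _ : Fin M => ℝ) :=
    e.symm (WithLp.toLp 2 (fun i => if 0 ≤ y i then (1:ℝ) else -1)) with hx
  have hxi : ∀ i, x i = if 0 ≤ y i then (1:ℝ) else -1 := fun i => rfl
  refine ⟨x, ?_, ?_⟩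
  · intro i
    rw [hxi]
    split <;> norm_num
  · intro z hz
    -- key real inequality
    have hinner : ∑ i, z i * y i = 0 := by
      have hz' : e z ∈ Z' := Submodule.mem_map_of_mem hz
      have := (Submodule.mem_orthogonal Z' y).mp hyV (e z) hz'
      have h2 : ∑ i, y i * (e z) i = 0 := by
        simpa [PiLp.inner_apply, RCLike.inner_apply, conj_trivial] using this
      rw [← h2]
      exact Finset.sum_congr rfl fun i _ => mul_comm _ _
    have hxy : ∑ i, x i * y i = ∑ i, |y i| := by
      apply Finset.sum_congr rfl
      intro i _
      rw [hxi]
      rcases le_or_gt 0 (y i) with h | h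
      · rw [if_pos h, abs_of_nonneg h]; ring
      · rw [if_neg (not_le.2 h), abs_of_neg h]; ring
    have habs : ((M:ℝ) - n) ≤ ∑ i, |y i| := by
      have h1 : ((M - n : ℕ) : ℝ) ≤ ((Finset.univ.filter fun i => |y i| = 1).card : ℝ) := by
        exact_mod_cast le_trans hortho hyc
      have h2 : ((Finset.univ.filter fun i => |y i| = 1).card : ℝ)
          ≤ ∑ i, |y i| := by
        calc ((Finset.univ.filter fun i => |y i| = 1).card : ℝ)
            = ∑ i ∈ Finset.univ.filter fun i => |y i| = 1, |y i| := by
              rw [Finset.sum_congr rfl (fun i hi => (Finset.mem_filter.mp hi).2)]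
              simp
          _ ≤ ∑ i, |y i| :=
              Finset.sum_le_sum_of_subset_of_nonneg (Finset.filter_subset _ _)
                (fun i _ _ => abs_nonneg _)
      calc ((M:ℝ) - n) ≤ ((M - n : ℕ) : ℝ) := by
            push_cast [Nat.cast_sub hn]; linarith
        _ ≤ _ := le_trans h1 h2
    have hreal : ((M:ℝ) - n) ≤ ∑ i, |x i - z i| := by
      have h3 : ∑ i, (x i - z i) * y i = ∑ i, |y i| := by
        simp only [sub_mul, Finset.sum_sub_distrib, hinner, hxy, sub_zero]
      have h4 : ∑ i, (x i - z i) * y i ≤ ∑ i, |x i - z i| := by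
        apply Finset.sum_le_sum
        intro i _
        calc (x i - z i) * y i ≤ |(x i - z i) * y i| := le_abs_self _
          _ = |x i - z i| * |y i| := abs_mul _ _
          _ ≤ |x i - z i| * 1 := by
              exact mul_le_mul_of_nonneg_left (hyb i) (abs_nonneg _)
          _ = |x i - z i| := mul_one _
      linarith
    have hedist : edist x z = ENNReal.ofReal (∑ i, |x i - z i|) := by
      rw [PiLp.edist_eq_sum (by norm_num : (0:ℝ) < (1 : ℝ≥0∞).toReal)]
      simp only [ENNReal.toReal_one, ENNReal.rpow_one, one_div_one]
      rw [ENNReal.ofReal_sum_of_nonneg (fun i _ => abs_nonneg _)]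
      apply Finset.sum_congr rfl
      intro i _
      rw [edist_dist, Real.dist_eq]
    rw [hedist]
    calc ((M - n : ℕ) : ℝ≥0∞) = ENNReal.ofReal ((M:ℝ) - n) := by
          rw [← ENNReal.ofReal_natCast]
          congr 1
          push_cast [Nat.cast_sub hn]
          ring
      _ ≤ _ := ENNReal.ofReal_le_ofReal hreal

lemma card_filter_ge (M n : ℕ) (hn : n ≤ M) :
    (Finset.univ.filter fun i : Fin M => ¬ i.1 < n).card = M - n := by
  classical
  have h1 : (Finset.univ.filter fun i : Fin M => i.1 < n)
      = Finset.map (Fin.castLEEmb hn) Finset.univ := by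
    ext i
    simp only [Finset.mem_filter, Finset.mem_univ, true_and, Finset.mem_map,
      Fin.castLEEmb, Function.Embedding.coeFn_mk]
    constructor
    · intro h
      exact ⟨⟨i.1, h⟩, Fin.ext rfl⟩
    · rintro ⟨j, rfl⟩
      exact j.2
  have h2 := Finset.card_filter_add_card_filter_not
    (s := (Finset.univ : Finset (Fin M))) (p := fun i => i.1 < n)
  rw [h1, Finset.card_map, Finset.card_univ, Fintype.card_fin, Finset.card_univ,
    Fintype.card_fin] at h2
  omega

lemma upper_bound (M n : ℕ) (hn : n ≤ M) :
    ∃ Z : Submodule ℝ (PiLp 1 (fun _ : Fin M => ℝ)),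
      Module.rank ℝ Z ≤ (n : Cardinal) ∧
      ∀ x : PiLp 1 (fun _ : Fin M => ℝ), (∀ i, |x i| ≤ 1) →
        ∃ z ∈ Z, edist x z ≤ ((M - n : ℕ) : ℝ≥0∞) := by
  classical
  set e1 := WithLp.linearEquiv 1 ℝ (Fin M → ℝ) with he1
  set g : Fin n → PiLp 1 (fun _ : Fin M => ℝ) :=
    fun j => e1.symm (Pi.single (Fin.castLE hn j) 1) with hg
  refine ⟨Submodule.span ℝ (Set.range g), ?_, ?_⟩
  · calc Module.rank ℝ (Submodule.span ℝ (Set.range g))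
        ≤ Cardinal.mk (Set.range g) := rank_span_le _
      _ ≤ Cardinal.mk (Fin n) := Cardinal.mk_range_le
      _ = n := by simp
  · intro x hx
    set u : Fin M → ℝ := fun i => if i.1 < n then x i else 0 with hu
    have hu_sum : u = ∑ j : Fin n,
        x (Fin.castLE hn j) • (Pi.single (Fin.castLE hn j) (1:ℝ) : Fin M → ℝ) := by
      funext i
      rw [Finset.sum_apply]
      simp only [Pi.smul_apply, Pi.single_apply, smul_eq_mul]
      by_cases h : i.1 < n
      · rw [Finset.sum_eq_single (⟨i.1, h⟩ : Fin n)]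
        · have he : Fin.castLE hn (⟨i.1, h⟩ : Fin n) = i := Fin.ext rfl
          rw [he, if_pos rfl, mul_one, hu]
          simp [h]
        · intro j _ hj
          rw [if_neg, mul_zero]
          intro hij
          exact hj (Fin.ext (by simpa using congrArg Fin.val hij.symm))
        · intro h'
          exact absurd (Finset.mem_univ _) h'
      · rw [hu]
        simp only [if_neg h]
        refine (Finset.sum_eq_zero ?_).symm
        intro j _
        rw [if_neg, mul_zero]
        intro hij
        exact h (by rw [hij]; simpa using j.2)
    set z : PiLp 1 (fun _ : Fin M => ℝ) := e1.symm u with hz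
    have hzmem : z ∈ Submodule.span ℝ (Set.range g) := by
      rw [hz, hu_sum, map_sum]
      apply Submodule.sum_mem
      intro j _
      rw [map_smul]
      exact Submodule.smul_mem _ _ (Submodule.subset_span ⟨j, rfl⟩)
    refine ⟨z, hzmem, ?_⟩
    have hzi : ∀ i, z i = u i := fun i => rfl
    have hedist : edist x z = ENNReal.ofReal (∑ i, |x i - z i|) := by
      rw [PiLp.edist_eq_sum (by norm_num : (0:ℝ) < (1 : ℝ≥0∞).toReal)]
      simp only [ENNReal.toReal_one, ENNReal.rpow_one, one_div_one]
      rw [ENNReal.ofReal_sum_of_nonneg (fun i _ => abs_nonneg _)]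
      exact Finset.sum_congr rfl fun i _ => by rw [edist_dist, Real.dist_eq]
    rw [hedist]
    have hsum : ∑ i, |x i - z i| ≤ ((M - n : ℕ) : ℝ) := by
      calc ∑ i, |x i - z i| = ∑ i : Fin M, (if i.1 < n then 0 else |x i|) := by
            apply Finset.sum_congr rfl
            intro i _
            rw [hzi, hu]
            by_cases h : i.1 < n
            · simp [h]
            · simp [h]
        _ ≤ ∑ i : Fin M, (if i.1 < n then (0:ℝ) else 1) := by
            apply Finset.sum_le_sum
            intro i _
            by_cases h : i.1 < n
            · simp [h]
            · simpa [h] using hx i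
        _ = ((M - n : ℕ) : ℝ) := by
            rw [Finset.sum_ite, Finset.sum_const, Finset.sum_const]
            have hcf := card_filter_ge M n hn
            simp only [not_lt] at hcf
            simp [hcf]
    calc ENNReal.ofReal (∑ i, |x i - z i|) ≤ ENNReal.ofReal ((M - n : ℕ) : ℝ) :=
          ENNReal.ofReal_le_ofReal hsum
      _ = ((M - n : ℕ) : ℝ≥0∞) := ENNReal.ofReal_natCast _


/-- The Kolmogorov `n`-width of a subset `H` of a normed space `Y`. -/
noncomputable def kolWidth {Y : Type*} [NormedAddCommGroup Y] [NormedSpace ℝ Y]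
    (n : ℕ) (H : Set Y) : ℝ≥0∞ :=
  ⨅ (Z : Submodule ℝ Y) (_ : Module.rank ℝ Z ≤ (n : Cardinal)),
    ⨆ x ∈ H, ⨅ z ∈ (Z : Set Y), edist x z

/-- `d_n(b_∞^M, ℓ_1^M) = M - n` for `0 ≤ n ≤ M`: the Kolmogorov `n`-width of the
unit cube of `ℝ^M`, measured in the `ℓ¹` norm, equals `M - n`. -/
theorem stmt8 (M n : ℕ) (hn : n ≤ M) :
    kolWidth n {a : PiLp 1 (fun _ : Fin M => ℝ) | ∀ i, |a i| ≤ 1} =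
      ((M - n : ℕ) : ℝ≥0∞) := by
  apply le_antisymm
  · obtain ⟨Z, hZr, hZ⟩ := upper_bound M n hn
    refine iInf_le_of_le Z (iInf_le_of_le hZr ?_)
    apply iSup₂_le
    intro x hx
    obtain ⟨z, hz, hb⟩ := hZ x hx
    exact le_trans (iInf₂_le z hz) hb
  · refine le_iInf fun Z => le_iInf fun hZ => ?_
    obtain ⟨x, hx, hb⟩ := lower_bound M n hn Z hZ
    refine le_trans ?_
      (le_iSup₂ (f := fun x (_ : x ∈ {a : PiLp 1 (fun _ : Fin M => ℝ) | ∀ i, |a i| ≤ 1}) =>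
        ⨅ z ∈ (Z : Set (PiLp 1 (fun _ : Fin M => ℝ))), edist x z) x hx)
    exact le_iInf₂ fun z hz => hb z hz
end

section
/- For 0 ≤ n ≤ M, the Kolmogorov n-width of the unit ball of ℓ^1 in ℝ^M, measured in the ℓ² norm, equals √(1 − n/M): d_n(b_1^M, ℓ_2^M) = √(1 − n/M). -/
open Finset

noncomputable def theta (M : ℕ) : ℝ := 2 * Real.pi / M

lemma expSum (M : ℕ) (hM : 0 < M) (m : ℤ) (h : ¬ ((M:ℤ) ∣ m)) :
    ∑ j ∈ Finset.range M, Complex.exp ((m * theta M) * Complex.I) ^ j = 0 := by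
  set z : ℂ := Complex.exp ((m * theta M) * Complex.I) with hz
  have hMC : (M:ℂ) ≠ 0 := Nat.cast_ne_zero.mpr hM.ne'
  have hMR : (M:ℝ) ≠ 0 := Nat.cast_ne_zero.mpr hM.ne'
  have hzM : z ^ M = 1 := by
    rw [hz, ← Complex.exp_nat_mul, Complex.exp_eq_one_iff]
    refine ⟨m, ?_⟩
    have h1 : ((theta M : ℝ) : ℂ) = 2 * Real.pi / M := by
      rw [theta]; push_cast; ring
    rw [h1]
    field_simp
  have hz1 : z ≠ 1 := by
    intro hz1
    rw [hz, Complex.exp_eq_one_iff] at hz1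
    obtain ⟨k, hk⟩ := hz1
    apply h
    have hk' : ((m : ℂ) * theta M) = k * (2 * Real.pi) := by
      apply mul_right_cancel₀ Complex.I_ne_zero
      rw [hk]; ring
    have hkR : (m : ℝ) * theta M = k * (2 * Real.pi) := by
      exact_mod_cast hk'
    have hpi : (2 * Real.pi) ≠ 0 := by positivity
    rw [theta] at hkR
    have h2 : (m : ℝ) = (M : ℝ) * k := by
      field_simp at hkR
      nlinarith [hkR, Real.pi_pos]
    exact ⟨k, by exact_mod_cast h2⟩
  rw [geom_sum_eq hz1, hzM]
  simp

lemma cosSum (M : ℕ) (hM : 0 < M) (m : ℤ) (h : ¬ ((M:ℤ) ∣ m)) :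
    ∑ j : Fin M, Real.cos (m * j * theta M) = 0 := by
  have key : ∀ j : ℕ, Complex.exp ((m * theta M) * Complex.I) ^ j
      = Complex.exp (((m * j * theta M : ℝ) : ℂ) * Complex.I) := by
    intro j; rw [← Complex.exp_nat_mul]; congr 1; push_cast; ring
  have h0 := expSum M hM m h
  rw [Fin.sum_univ_eq_sum_range (fun j : ℕ => Real.cos (m * j * theta M)) M]
  have : ∑ j ∈ Finset.range M, Real.cos (m * j * theta M)
      = (∑ j ∈ Finset.range M, Complex.exp ((m * theta M) * Complex.I) ^ j).re := by
    rw [Complex.re_sum]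
    refine Finset.sum_congr rfl fun j _ => ?_
    rw [key j, Complex.exp_ofReal_mul_I_re]
  rw [this, h0, Complex.zero_re]

lemma sinSum' (M : ℕ) (hM : 0 < M) (m : ℤ) (h : ¬ ((M:ℤ) ∣ m)) :
    ∑ j : Fin M, Real.sin (m * j * theta M) = 0 := by
  have key : ∀ j : ℕ, Complex.exp ((m * theta M) * Complex.I) ^ j
      = Complex.exp (((m * j * theta M : ℝ) : ℂ) * Complex.I) := by
    intro j; rw [← Complex.exp_nat_mul]; congr 1; push_cast; ring
  have h0 := expSum M hM m h
  rw [Fin.sum_univ_eq_sum_range (fun j : ℕ => Real.sin (m * j * theta M)) M]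
  have : ∑ j ∈ Finset.range M, Real.sin (m * j * theta M)
      = (∑ j ∈ Finset.range M, Complex.exp ((m * theta M) * Complex.I) ^ j).im := by
    rw [Complex.im_sum]
    refine Finset.sum_congr rfl fun j _ => ?_
    rw [key j, Complex.exp_ofReal_mul_I_im]
  rw [this, h0, Complex.zero_im]

lemma cosSumDvd (M : ℕ) (hM : 0 < M) (m : ℤ) (h : (M:ℤ) ∣ m) :
    ∑ j : Fin M, Real.cos (m * j * theta M) = M := by
  obtain ⟨q, rfl⟩ := h
  have hMR : (M:ℝ) ≠ 0 := Nat.cast_ne_zero.mpr hM.ne'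
  have : ∀ j : Fin M, Real.cos ((M * q : ℤ) * j * theta M) = 1 := by
    intro j
    have : ((M * q : ℤ) : ℝ) * j * theta M = (q * j : ℤ) * (2 * Real.pi) := by
      rw [theta]; push_cast; field_simp
    rw [this, Real.cos_int_mul_two_pi]
  rw [Finset.sum_congr rfl fun j _ => this j, Finset.sum_const]
  simp

lemma sinSum (M : ℕ) (hM : 0 < M) (m : ℤ) :
    ∑ j : Fin M, Real.sin (m * j * theta M) = 0 := by
  by_cases h : (M:ℤ) ∣ m
  · obtain ⟨q, rfl⟩ := h
    have hMR : (M:ℝ) ≠ 0 := Nat.cast_ne_zero.mpr hM.ne'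
    have : ∀ j : Fin M, Real.sin ((M * q : ℤ) * j * theta M) = 0 := by
      intro j
      have : ((M * q : ℤ) : ℝ) * j * theta M = (q * j : ℤ) * (2 * Real.pi) := by
        rw [theta]; push_cast; field_simp
      have h2 : ((q * j : ℤ) : ℝ) * (2 * Real.pi) = ((2 * (q * j) : ℤ) : ℝ) * Real.pi := by
        push_cast; ring
      rw [this, h2, Real.sin_int_mul_pi]
    rw [Finset.sum_congr rfl fun j _ => this j, Finset.sum_const]
    simp
  · exact sinSum' M hM m h

lemma notdvd (M : ℕ) (m : ℤ) (h1 : 0 < m) (h2 : m < M) : ¬ ((M:ℤ) ∣ m) := by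
  intro hd
  have := Int.le_of_dvd h1 hd
  omega

lemma cc_prod (a b : ℝ) : Real.cos a * Real.cos b = (Real.cos (a - b) + Real.cos (a + b)) / 2 := by
  rw [Real.cos_sub, Real.cos_add]; ring

lemma ss_prod (a b : ℝ) : Real.sin a * Real.sin b = (Real.cos (a - b) - Real.cos (a + b)) / 2 := by
  rw [Real.cos_sub, Real.cos_add]; ring

lemma cs_prod (a b : ℝ) : Real.cos a * Real.sin b = (Real.sin (a + b) - Real.sin (a - b)) / 2 := by
  rw [Real.sin_sub, Real.sin_add]; ring

lemma sumCC (M : ℕ) (hM : 0 < M) (t t' : ℕ) (ht0 : 1 ≤ t) (ht0' : 1 ≤ t')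
    (ht : 2 * t < M) (ht' : 2 * t' < M) :
    ∑ i : Fin M, Real.cos ((t:ℝ) * ((i:ℕ):ℝ) * theta M) * Real.cos ((t':ℝ) * ((i:ℕ):ℝ) * theta M)
      = if t = t' then (M : ℝ) / 2 else 0 := by
  have key : ∀ i : Fin M, Real.cos ((t:ℝ) * ((i:ℕ):ℝ) * theta M) * Real.cos ((t':ℝ) * ((i:ℕ):ℝ) * theta M)
      = (Real.cos (((((t:ℤ) - t' : ℤ)):ℝ) * ((i:ℕ):ℝ) * theta M) + Real.cos (((((t:ℤ) + t' : ℤ)):ℝ) * ((i:ℕ):ℝ) * theta M)) / 2 := by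
    intro i
    rw [cc_prod]
    have h1 : (t:ℝ) * i * theta M - (t':ℝ) * i * theta M = ((((t:ℤ) - t' : ℤ)):ℝ) * ((i:ℕ):ℝ) * theta M := by
      push_cast; ring
    have h2 : (t:ℝ) * i * theta M + (t':ℝ) * i * theta M = ((((t:ℤ) + t' : ℤ)):ℝ) * ((i:ℕ):ℝ) * theta M := by
      push_cast; ring
    rw [h1, h2]
  simp only [key]
  rw [← Finset.sum_div, Finset.sum_add_distrib]

  have hplus : ∑ i : Fin M, Real.cos ((((t:ℤ) + t' : ℤ):ℝ) * ((i:ℕ):ℝ) * theta M) = 0 := by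
    apply cosSum M hM
    apply notdvd M _ (by omega) (by omega)
  by_cases he : t = t'
  · subst he
    rw [hplus, cosSumDvd M hM _ (by simp)]
    simp
  · rw [hplus, cosSum M hM ((t:ℤ) - t') ?_]
    · simp [he]
    · rcases Nat.lt_or_ge t t' with hlt | hge
      · rw [← dvd_neg]
        apply notdvd M _ (by omega) (by omega)
      · apply notdvd M _ (by omega) (by omega)

lemma sumSS (M : ℕ) (hM : 0 < M) (t t' : ℕ) (ht0 : 1 ≤ t) (ht0' : 1 ≤ t')
    (ht : 2 * t < M) (ht' : 2 * t' < M) :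
    ∑ i : Fin M, Real.sin ((t:ℝ) * ((i:ℕ):ℝ) * theta M) * Real.sin ((t':ℝ) * ((i:ℕ):ℝ) * theta M)
      = if t = t' then (M : ℝ) / 2 else 0 := by
  have key : ∀ i : Fin M, Real.sin ((t:ℝ) * ((i:ℕ):ℝ) * theta M) * Real.sin ((t':ℝ) * ((i:ℕ):ℝ) * theta M)
      = (Real.cos (((((t:ℤ) - t' : ℤ)):ℝ) * ((i:ℕ):ℝ) * theta M) - Real.cos (((((t:ℤ) + t' : ℤ)):ℝ) * ((i:ℕ):ℝ) * theta M)) / 2 := by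
    intro i
    rw [ss_prod]
    have h1 : (t:ℝ) * i * theta M - (t':ℝ) * i * theta M = ((((t:ℤ) - t' : ℤ)):ℝ) * ((i:ℕ):ℝ) * theta M := by
      push_cast; ring
    have h2 : (t:ℝ) * i * theta M + (t':ℝ) * i * theta M = ((((t:ℤ) + t' : ℤ)):ℝ) * ((i:ℕ):ℝ) * theta M := by
      push_cast; ring
    rw [h1, h2]
  simp only [key]
  rw [← Finset.sum_div, Finset.sum_sub_distrib]
  have hplus : ∑ i : Fin M, Real.cos ((((t:ℤ) + t' : ℤ):ℝ) * ((i:ℕ):ℝ) * theta M) = 0 := by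
    apply cosSum M hM
    apply notdvd M _ (by omega) (by omega)
  by_cases he : t = t'
  · subst he
    rw [hplus, cosSumDvd M hM _ (by simp)]
    simp
  · rw [hplus, cosSum M hM ((t:ℤ) - t') ?_]
    · simp [he]
    · rcases Nat.lt_or_ge t t' with hlt | hge
      · rw [← dvd_neg]
        apply notdvd M _ (by omega) (by omega)
      · apply notdvd M _ (by omega) (by omega)

lemma sumCS (M : ℕ) (hM : 0 < M) (t t' : ℕ) :
    ∑ i : Fin M, Real.cos ((t:ℝ) * ((i:ℕ):ℝ) * theta M) * Real.sin ((t':ℝ) * ((i:ℕ):ℝ) * theta M) = 0 := by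
  have key : ∀ i : Fin M, Real.cos ((t:ℝ) * ((i:ℕ):ℝ) * theta M) * Real.sin ((t':ℝ) * ((i:ℕ):ℝ) * theta M)
      = (Real.sin (((((t:ℤ) + t' : ℤ)):ℝ) * ((i:ℕ):ℝ) * theta M) - Real.sin (((((t:ℤ) - t' : ℤ)):ℝ) * ((i:ℕ):ℝ) * theta M)) / 2 := by
    intro i
    rw [cs_prod]
    have h1 : (t:ℝ) * i * theta M - (t':ℝ) * i * theta M = ((((t:ℤ) - t' : ℤ)):ℝ) * ((i:ℕ):ℝ) * theta M := by
      push_cast; ring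
    have h2 : (t:ℝ) * i * theta M + (t':ℝ) * i * theta M = ((((t:ℤ) + t' : ℤ)):ℝ) * ((i:ℕ):ℝ) * theta M := by
      push_cast; ring
    rw [h1, h2]
  simp only [key]
  rw [← Finset.sum_div, Finset.sum_sub_distrib, sinSum M hM, sinSum M hM]
  ring

lemma sumC1 (M : ℕ) (hM : 0 < M) (t : ℕ) (ht0 : 1 ≤ t) (ht : t < M) :
    ∑ i : Fin M, Real.cos ((t:ℝ) * ((i:ℕ):ℝ) * theta M) = 0 := by
  have key : ∀ i : Fin M, Real.cos ((t:ℝ) * ((i:ℕ):ℝ) * theta M)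
      = Real.cos (((t:ℤ):ℝ) * ((i:ℕ):ℝ) * theta M) := by
    intro i; norm_num
  simp only [key]
  exact cosSum M hM t (notdvd M t (by omega) (by omega))

lemma sumS1 (M : ℕ) (hM : 0 < M) (t : ℕ) :
    ∑ i : Fin M, Real.sin ((t:ℝ) * ((i:ℕ):ℝ) * theta M) = 0 := by
  have key : ∀ i : Fin M, Real.sin ((t:ℝ) * ((i:ℕ):ℝ) * theta M)
      = Real.sin (((t:ℤ):ℝ) * ((i:ℕ):ℝ) * theta M) := by
    intro i; norm_num
  simp only [key]
  exact sinSum M hM t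

noncomputable def bas (M : ℕ) : ℕ → EuclideanSpace ℝ (Fin M) := fun j =>
  if j = 0 then WithLp.toLp 2 (fun _ => Real.sqrt (1 / M))
  else if j % 2 = 1 then
    WithLp.toLp 2 (fun i : Fin M => Real.sqrt (2 / M) * Real.cos (((((j+1)/2 : ℕ)):ℝ) * ((i:ℕ):ℝ) * theta M))
  else
    WithLp.toLp 2 (fun i : Fin M => Real.sqrt (2 / M) * Real.sin (((((j+1)/2 : ℕ)):ℝ) * ((i:ℕ):ℝ) * theta M))

open scoped RealInnerProductSpace

lemma inner_eq (M : ℕ) (x y : EuclideanSpace ℝ (Fin M)) : ⟪x, y⟫ = ∑ i, x i * y i := by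
  simp [PiLp.inner_apply, RCLike.inner_apply, conj_trivial]
  exact Finset.sum_congr rfl fun _ _ => mul_comm _ _

lemma bas_inner (M : ℕ) (hM : 0 < M) (j j' : ℕ)
    (hj : 2 * ((j+1)/2) < M) (hj' : 2 * ((j'+1)/2) < M) :
    ⟪bas M j, bas M j'⟫ = if j = j' then (1:ℝ) else 0 := by
  have hMR : (M:ℝ) ≠ 0 := Nat.cast_ne_zero.mpr hM.ne'
  have hs1 : Real.sqrt (1/M) * Real.sqrt (1/M) = 1/M := Real.mul_self_sqrt (by positivity)
  have hs2 : Real.sqrt (2/M) * Real.sqrt (2/M) = 2/M := Real.mul_self_sqrt (by positivity)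
  rw [inner_eq]
  by_cases h0 : j = 0 <;> by_cases h0' : j' = 0
  · subst h0; subst h0'
    simp only [bas, eq_self_iff_true, if_true, PiLp.toLp_apply]
    rw [Finset.sum_const, Finset.card_univ, Fintype.card_fin, nsmul_eq_mul, hs1]
    field_simp
  · subst h0
    simp only [bas, eq_self_iff_true, if_true, if_neg h0', PiLp.toLp_apply]
    rw [if_neg (by omega : ¬ (0:ℕ) = j')]
    by_cases hp : j' % 2 = 1
    · simp only [if_pos hp]
      have key : ∀ i : Fin M, Real.sqrt (1/M) *
          (Real.sqrt (2/M) * Real.cos (((((j'+1)/2 : ℕ)):ℝ) * ((i:ℕ):ℝ) * theta M))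
          = (Real.sqrt (1/M) * Real.sqrt (2/M)) *
            Real.cos (((((j'+1)/2 : ℕ)):ℝ) * ((i:ℕ):ℝ) * theta M) := fun i => by ring
      simp only [key]
      rw [← Finset.mul_sum, sumC1 M hM _ (by omega) (by omega), mul_zero]
    · simp only [if_neg hp]
      have key : ∀ i : Fin M, Real.sqrt (1/M) *
          (Real.sqrt (2/M) * Real.sin (((((j'+1)/2 : ℕ)):ℝ) * ((i:ℕ):ℝ) * theta M))
          = (Real.sqrt (1/M) * Real.sqrt (2/M)) *
            Real.sin (((((j'+1)/2 : ℕ)):ℝ) * ((i:ℕ):ℝ) * theta M) := fun i => by ring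
      simp only [key]
      rw [← Finset.mul_sum, sumS1 M hM _, mul_zero]
  · subst h0'
    simp only [bas, eq_self_iff_true, if_true, if_neg h0, PiLp.toLp_apply]
    by_cases hp : j % 2 = 1
    · simp only [if_pos hp]
      have key : ∀ i : Fin M,
          (Real.sqrt (2/M) * Real.cos (((((j+1)/2 : ℕ)):ℝ) * ((i:ℕ):ℝ) * theta M)) * Real.sqrt (1/M)
          = (Real.sqrt (1/M) * Real.sqrt (2/M)) *
            Real.cos (((((j+1)/2 : ℕ)):ℝ) * ((i:ℕ):ℝ) * theta M) := fun i => by ring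
      simp only [key]
      rw [← Finset.mul_sum, sumC1 M hM _ (by omega) (by omega), mul_zero]
    · simp only [if_neg hp]
      have key : ∀ i : Fin M,
          (Real.sqrt (2/M) * Real.sin (((((j+1)/2 : ℕ)):ℝ) * ((i:ℕ):ℝ) * theta M)) * Real.sqrt (1/M)
          = (Real.sqrt (1/M) * Real.sqrt (2/M)) *
            Real.sin (((((j+1)/2 : ℕ)):ℝ) * ((i:ℕ):ℝ) * theta M) := fun i => by ring
      simp only [key]
      rw [← Finset.mul_sum, sumS1 M hM _, mul_zero]
  · have ht0 : 1 ≤ (j+1)/2 := by omega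
    have ht0' : 1 ≤ (j'+1)/2 := by omega
    simp only [bas, if_neg h0, if_neg h0', PiLp.toLp_apply]
    by_cases hp : j % 2 = 1 <;> by_cases hp' : j' % 2 = 1
    · simp only [if_pos hp, if_pos hp']
      have key : ∀ i : Fin M,
          (Real.sqrt (2/M) * Real.cos (((((j+1)/2 : ℕ)):ℝ) * ((i:ℕ):ℝ) * theta M)) *
          (Real.sqrt (2/M) * Real.cos (((((j'+1)/2 : ℕ)):ℝ) * ((i:ℕ):ℝ) * theta M))
          = (Real.sqrt (2/M) * Real.sqrt (2/M)) *
            (Real.cos (((((j+1)/2 : ℕ)):ℝ) * ((i:ℕ):ℝ) * theta M) *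
             Real.cos (((((j'+1)/2 : ℕ)):ℝ) * ((i:ℕ):ℝ) * theta M)) := fun i => by ring
      simp only [key]
      rw [← Finset.mul_sum, sumCC M hM _ _ ht0 ht0' hj hj', hs2]
      by_cases he : j = j'
      · subst he
        rw [if_pos rfl, if_pos rfl]
        field_simp
      · rw [if_neg (by omega : ¬ (j+1)/2 = (j'+1)/2), if_neg he, mul_zero]
    · simp only [if_pos hp, if_neg hp']
      have key : ∀ i : Fin M,
          (Real.sqrt (2/M) * Real.cos (((((j+1)/2 : ℕ)):ℝ) * ((i:ℕ):ℝ) * theta M)) *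
          (Real.sqrt (2/M) * Real.sin (((((j'+1)/2 : ℕ)):ℝ) * ((i:ℕ):ℝ) * theta M))
          = (Real.sqrt (2/M) * Real.sqrt (2/M)) *
            (Real.cos (((((j+1)/2 : ℕ)):ℝ) * ((i:ℕ):ℝ) * theta M) *
             Real.sin (((((j'+1)/2 : ℕ)):ℝ) * ((i:ℕ):ℝ) * theta M)) := fun i => by ring
      simp only [key]
      rw [← Finset.mul_sum, sumCS M hM, mul_zero, if_neg (by omega : ¬ j = j')]
    · simp only [if_neg hp, if_pos hp']
      have key : ∀ i : Fin M,
          (Real.sqrt (2/M) * Real.sin (((((j+1)/2 : ℕ)):ℝ) * ((i:ℕ):ℝ) * theta M)) *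
          (Real.sqrt (2/M) * Real.cos (((((j'+1)/2 : ℕ)):ℝ) * ((i:ℕ):ℝ) * theta M))
          = (Real.sqrt (2/M) * Real.sqrt (2/M)) *
            (Real.cos (((((j'+1)/2 : ℕ)):ℝ) * ((i:ℕ):ℝ) * theta M) *
             Real.sin (((((j+1)/2 : ℕ)):ℝ) * ((i:ℕ):ℝ) * theta M)) := fun i => by ring
      simp only [key]
      rw [← Finset.mul_sum, sumCS M hM, mul_zero, if_neg (by omega : ¬ j = j')]
    · simp only [if_neg hp, if_neg hp']
      have key : ∀ i : Fin M,
          (Real.sqrt (2/M) * Real.sin (((((j+1)/2 : ℕ)):ℝ) * ((i:ℕ):ℝ) * theta M)) *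
          (Real.sqrt (2/M) * Real.sin (((((j'+1)/2 : ℕ)):ℝ) * ((i:ℕ):ℝ) * theta M))
          = (Real.sqrt (2/M) * Real.sqrt (2/M)) *
            (Real.sin (((((j+1)/2 : ℕ)):ℝ) * ((i:ℕ):ℝ) * theta M) *
             Real.sin (((((j'+1)/2 : ℕ)):ℝ) * ((i:ℕ):ℝ) * theta M)) := fun i => by ring
      simp only [key]
      rw [← Finset.mul_sum, sumSS M hM _ _ ht0 ht0' hj hj', hs2]
      by_cases he : j = j'
      · subst he
        rw [if_pos rfl, if_pos rfl]
        field_simp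
      · rw [if_neg (by omega : ¬ (j+1)/2 = (j'+1)/2), if_neg he, mul_zero]

lemma bas_zero_sq (M : ℕ) (i : Fin M) : (bas M 0 i)^2 = 1/M := by
  simp only [bas, eq_self_iff_true, if_true, PiLp.toLp_apply]
  exact Real.sq_sqrt (by positivity)

lemma bas_pair_sq (M : ℕ) (i : Fin M) (j : ℕ) (hj : j % 2 = 1) :
    (bas M j i)^2 + (bas M (j+1) i)^2 = 2/M := by
  have h1 : ¬ j = 0 := by omega
  have h2 : ¬ j + 1 = 0 := by omega
  have h3 : ¬ (j+1) % 2 = 1 := by omega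
  have h4 : (j+1+1)/2 = (j+1)/2 := by omega
  simp only [bas, if_neg h1, if_neg h2, if_pos hj, if_neg h3, h4, PiLp.toLp_apply]
  have hs : Real.sqrt (2/M) ^ 2 = 2/M := Real.sq_sqrt (by positivity)
  have hcs := Real.sin_sq_add_cos_sq ((((j+1)/2 : ℕ):ℝ) * ((i:ℕ):ℝ) * theta M)
  nlinarith [hs, hcs]

lemma pairSum (M : ℕ) (i : Fin M) (m : ℕ) :
    ∑ j ∈ Finset.Ico 1 (2*m+1), (bas M j i)^2 = m * (2/M) := by
  induction m with
  | zero => simp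
  | succ m ih =>
    have e1 : 2*(m+1)+1 = (2*m+1) + 1 + 1 := by ring
    rw [e1, Finset.sum_Ico_succ_top (by omega), Finset.sum_Ico_succ_top (by omega), ih]
    have := bas_pair_sq M i (2*m+1) (by omega)
    push_cast
    nlinarith [this]

lemma rangeSum (M n : ℕ) (i : Fin M) :
    ∑ k ∈ Finset.range n, (bas M ((n+1) % 2 + k) i)^2 = n / M := by
  have base : ∑ j ∈ Finset.Ico ((n+1)%2) (n + (n+1)%2), (bas M j i)^2
      = ∑ k ∈ Finset.range (n + (n+1)%2 - (n+1)%2), (bas M ((n+1)%2 + k) i)^2 :=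
    Finset.sum_Ico_eq_sum_range (fun j => (bas M j i)^2) ((n+1)%2) (n + (n+1)%2)
  rw [show n + (n+1)%2 - (n+1)%2 = n from by omega] at base
  rw [← base]
  rcases Nat.even_or_odd n with he | ho
  · obtain ⟨m, hm⟩ := he
    have h2 : (n+1) % 2 = 1 := by omega
    rw [h2]
    rw [show n + 1 = 2*m + 1 from by omega, pairSum M i m]
    rw [show n = 2 * m from by omega]
    push_cast
    ring
  · obtain ⟨m, hm⟩ := ho
    have h2 : (n+1) % 2 = 0 := by omega
    rw [h2]
    have hsplit : ∑ j ∈ Finset.Ico 0 (n + 0), (bas M j i)^2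
        = (bas M 0 i)^2 + ∑ j ∈ Finset.Ico 1 (2*m+1), (bas M j i)^2 := by
      rw [show n + 0 = 2*m+1 from by omega,
        Finset.sum_eq_sum_Ico_succ_bot (by omega : 0 < 2*m+1) (fun j => (bas M j i)^2)]
    rw [hsplit, pairSum M i m, bas_zero_sq M i]
    rw [show n = 2*m+1 from by omega]
    push_cast
    field_simp
    ring

lemma vfam_orthonormal (M n : ℕ) (hn : n < M) :
    Orthonormal ℝ (fun k : Fin n => bas M ((n+1)%2 + k)) := by
  rw [orthonormal_iff_ite]
  intro k l
  have hk := k.isLt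
  have hl := l.isLt
  rw [bas_inner M (by omega) _ _ (by omega) (by omega)]
  by_cases h : k = l
  · simp [h]
  · rw [if_neg (fun hc => h (Fin.ext (by omega))), if_neg h]

lemma orth_norm_sq (M : ℕ) {ι : Type*} [Fintype ι] (v : ι → EuclideanSpace ℝ (Fin M))
    (hv : Orthonormal ℝ v) (y : EuclideanSpace ℝ (Fin M)) :
    ‖y - ∑ k, ⟪v k, y⟫ • v k‖^2 = ‖y‖^2 - ∑ k, ⟪v k, y⟫^2 := by
  rw [norm_sub_sq_real]
  have h1 : ⟪y, ∑ k, ⟪v k, y⟫ • v k⟫ = ∑ k, ⟪v k, y⟫^2 := by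
    rw [inner_sum]
    refine Finset.sum_congr rfl fun k _ => ?_
    rw [real_inner_smul_right, ← real_inner_comm y (v k)]
    ring
  have h2 : ‖∑ k, ⟪v k, y⟫ • v k‖^2 = ∑ k, ⟪v k, y⟫^2 := by
    rw [← real_inner_self_eq_norm_sq, hv.inner_sum]
    simp [sq]
  rw [h1, h2]
  ring

lemma edecomp (M : ℕ) (x : EuclideanSpace ℝ (Fin M)) :
    x = ∑ j, x j • EuclideanSpace.single j (1:ℝ) := by
  have h := (EuclideanSpace.basisFun (Fin M) ℝ).sum_repr' x
  simp only [EuclideanSpace.basisFun_apply, EuclideanSpace.inner_single_left, map_one, one_mul,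
    conj_trivial] at h
  exact h.symm

lemma sum_sq_eq_norm (M : ℕ) (x : EuclideanSpace ℝ (Fin M)) :
    ∑ i, (x i)^2 = ‖x‖^2 := by
  rw [← real_inner_self_eq_norm_sq, inner_eq]
  simp [sq]

lemma inner_single (M : ℕ) (x : EuclideanSpace ℝ (Fin M)) (j : Fin M) :
    ⟪x, EuclideanSpace.single j (1:ℝ)⟫ = x j := by
  rw [EuclideanSpace.inner_single_right]
  simp

lemma exists_good_z (M n : ℕ) (hM : 0 < M) (hn : n < M) (x : EuclideanSpace ℝ (Fin M))
    (hx : ∑ i, |x i| ≤ 1) :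
    ∃ z ∈ Submodule.span ℝ (Set.range (fun k : Fin n => bas M ((n+1)%2 + k))),
      ‖x - z‖ ≤ Real.sqrt (1 - n/M) := by
  classical
  set v := fun k : Fin n => bas M ((n+1)%2 + k) with hv_def
  have hv : Orthonormal ℝ v := vfam_orthonormal M n hn
  have hM0 : (M:ℝ) ≠ 0 := Nat.cast_ne_zero.mpr hM.ne'
  have hfrac : 0 ≤ 1 - (n:ℝ)/M := by
    rw [sub_nonneg, div_le_one (by positivity)]
    exact_mod_cast hn.le
  -- the linear "residual" map
  set T : EuclideanSpace ℝ (Fin M) →ₗ[ℝ] EuclideanSpace ℝ (Fin M) :=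
    LinearMap.id - ∑ k, ((innerSL ℝ (v k)).toLinearMap.smulRight (v k)) with hT_def
  have hT_apply : ∀ y, T y = y - ∑ k, ⟪v k, y⟫ • v k := by
    intro y
    simp [hT_def, LinearMap.sub_apply, LinearMap.sum_apply]
  have hTnorm : ∀ j : Fin M, ‖T (EuclideanSpace.single j (1:ℝ))‖ = Real.sqrt (1 - n/M) := by
    intro j
    have h1 : ‖T (EuclideanSpace.single j (1:ℝ))‖^2 = 1 - n/M := by
      rw [hT_apply, orth_norm_sq M v hv]
      have h2 : ∀ k : Fin n, ⟪v k, EuclideanSpace.single j (1:ℝ)⟫^2 = (v k j)^2 := by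
        intro k
        rw [inner_single]
      rw [EuclideanSpace.norm_single]
      simp only [h2]
      have h3 : ∑ k : Fin n, (v k j)^2 = (n:ℝ)/M := by
        rw [hv_def]
        rw [Fin.sum_univ_eq_sum_range (fun k => (bas M ((n+1)%2 + k) j)^2) n]
        exact rangeSum M n j
      rw [h3]
      norm_num
    rw [(Real.sqrt_sq (norm_nonneg _)).symm, h1]
  refine ⟨∑ k, ⟪v k, x⟫ • v k, ?_, ?_⟩
  · exact Submodule.sum_mem _ fun k _ => Submodule.smul_mem _ _ (Submodule.subset_span ⟨k, rfl⟩)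
  · have hx_eq : x - ∑ k, ⟪v k, x⟫ • v k = T x := (hT_apply x).symm
    rw [hx_eq]
    calc ‖T x‖ = ‖∑ j, x j • T (EuclideanSpace.single j 1)‖ := by
          conv_lhs => rw [edecomp M x]
          rw [map_sum]
          simp_rw [map_smul]
      _ ≤ ∑ j, ‖x j • T (EuclideanSpace.single j 1)‖ := norm_sum_le _ _
      _ = ∑ j, |x j| * Real.sqrt (1 - n/M) := by
          refine Finset.sum_congr rfl fun j _ => ?_
          rw [norm_smul, hTnorm j, Real.norm_eq_abs]
      _ = (∑ j, |x j|) * Real.sqrt (1 - n/M) := by rw [← Finset.sum_mul]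
      _ ≤ 1 * Real.sqrt (1 - n/M) :=
          mul_le_mul_of_nonneg_right hx (Real.sqrt_nonneg _)
      _ = Real.sqrt (1 - n/M) := one_mul _

lemma lower_bound_aux (M n : ℕ) (hM : 0 < M) (hn : n ≤ M)
    (Z : Submodule ℝ (EuclideanSpace ℝ (Fin M)))
    (hZ : Module.rank ℝ Z ≤ (n : Cardinal)) :
    ∃ i : Fin M, ∀ z ∈ Z, Real.sqrt (1 - n/M) ≤ ‖EuclideanSpace.single i (1:ℝ) - z‖ := by
  classical
  have hM0 : (M:ℝ) ≠ 0 := Nat.cast_ne_zero.mpr hM.ne'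
  have hr : Module.finrank ℝ Z ≤ n := Module.finrank_le_of_rank_le hZ
  set r := Module.finrank ℝ Z with hr_def
  let b := stdOrthonormalBasis ℝ Z
  set g : Fin r → EuclideanSpace ℝ (Fin M) := fun k => (b k : EuclideanSpace ℝ (Fin M)) with hg_def
  have hg : Orthonormal ℝ g := by
    rw [orthonormal_iff_ite]
    intro k l
    have := b.orthonormal
    rw [orthonormal_iff_ite] at this
    rw [hg_def]
    rw [← Submodule.coe_inner, this k l]
  have hgnorm : ∀ k, ‖g k‖ = 1 := hg.1
  -- trace identity
  have htrace : ∑ i : Fin M, ∑ k : Fin r, ⟪g k, EuclideanSpace.single i (1:ℝ)⟫^2 = r := by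
    rw [Finset.sum_comm]
    have : ∀ k : Fin r, ∑ i : Fin M, ⟪g k, EuclideanSpace.single i (1:ℝ)⟫^2 = 1 := by
      intro k
      have h1 : ∀ i : Fin M, ⟪g k, EuclideanSpace.single i (1:ℝ)⟫^2 = (g k i)^2 := fun i => by
        rw [inner_single]
      simp only [h1]
      rw [sum_sq_eq_norm, hgnorm k, one_pow]
    rw [Finset.sum_congr rfl fun k _ => this k, Finset.sum_const, Finset.card_univ,
      Fintype.card_fin]
    simp
  -- pigeonhole
  have hpig : ∃ i : Fin M, ∑ k : Fin r, ⟪g k, EuclideanSpace.single i (1:ℝ)⟫^2 ≤ (n:ℝ)/M := by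
    by_contra hcon
    push_neg at hcon
    have hlt : (∑ i : Fin M, (n:ℝ)/M) < ∑ i : Fin M, ∑ k : Fin r, ⟪g k, EuclideanSpace.single i (1:ℝ)⟫^2 :=
      Finset.sum_lt_sum_of_nonempty (by simp [Finset.univ_nonempty_iff, Fin.pos_iff_nonempty.mp hM]) fun i _ => hcon i
    rw [htrace, Finset.sum_const, Finset.card_univ, Fintype.card_fin, nsmul_eq_mul] at hlt
    have : (M:ℝ) * ((n:ℝ)/M) = n := by field_simp
    rw [this] at hlt
    have : (r:ℝ) ≤ n := by exact_mod_cast hr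
    linarith
  obtain ⟨i, hi⟩ := hpig
  refine ⟨i, fun z hz => ?_⟩
  -- decompose z
  set a : Fin r → ℝ := fun k => b.repr ⟨z, hz⟩ k with ha_def
  have hz_eq : z = ∑ k, a k • g k := by
    have hsr := b.sum_repr ⟨z, hz⟩
    have h2 : Z.subtype (∑ k, b.repr ⟨z, hz⟩ k • b k) = Z.subtype ⟨z, hz⟩ := congrArg _ hsr
    rw [map_sum] at h2
    simp only [map_smul, Submodule.subtype_apply] at h2
    exact h2.symm
  set e : EuclideanSpace ℝ (Fin M) := EuclideanSpace.single i (1:ℝ) with he_def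
  set c : Fin r → ℝ := fun k => ⟪g k, e⟫ with hc_def
  have hnorm_sq : ‖e - z‖^2 ≥ 1 - (n:ℝ)/M := by
    rw [norm_sub_sq_real, hz_eq]
    have h1 : ⟪e, ∑ k, a k • g k⟫ = ∑ k, a k * c k := by
      rw [inner_sum]
      refine Finset.sum_congr rfl fun k _ => ?_
      rw [real_inner_smul_right, hc_def, real_inner_comm]
    have h2 : ‖∑ k, a k • g k‖^2 = ∑ k, (a k)^2 := by
      rw [← real_inner_self_eq_norm_sq, hg.inner_sum]
      simp [sq]
    have h3 : ‖e‖ = 1 := by rw [he_def, EuclideanSpace.norm_single, norm_one]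
    have h4 : (0:ℝ) ≤ ∑ k, (a k - c k)^2 := Finset.sum_nonneg fun k _ => sq_nonneg _
    have h5 : ∑ k, (a k - c k)^2 = ∑ k, (a k)^2 - 2 * ∑ k, (a k * c k) + ∑ k, (c k)^2 := by
      rw [Finset.mul_sum, ← Finset.sum_sub_distrib, ← Finset.sum_add_distrib]
      refine Finset.sum_congr rfl fun k _ => ?_
      ring
    have h6 : ∑ k, (c k)^2 ≤ (n:ℝ)/M := hi
    rw [h1, h2, h3]
    nlinarith [h4, h5, h6]
  have h7 : Real.sqrt (1 - (n:ℝ)/M) ≤ Real.sqrt (‖e - z‖^2) :=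
    Real.sqrt_le_sqrt (by linarith)
  rwa [Real.sqrt_sq (norm_nonneg _)] at h7

open scoped ENNReal NNReal

/-- `d_n(b_1^M, ℓ_2^M) = √(1 - n/M)` for `0 ≤ n ≤ M`: the Kolmogorov `n`-width of
the unit ball of `ℓ¹` in `ℝ^M`, measured in the Euclidean norm. -/
theorem stmt9 (M n : ℕ) (hM : 0 < M) (hn : n ≤ M) :
    kolWidth n {a : EuclideanSpace ℝ (Fin M) | ∑ i, |a i| ≤ 1} =
      ENNReal.ofReal (Real.sqrt (1 - (n : ℝ) / (M : ℝ))) := by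
  classical
  have hM0 : (M:ℝ) ≠ 0 := Nat.cast_ne_zero.mpr hM.ne'
  rw [kolWidth]
  apply le_antisymm
  · rcases eq_or_lt_of_le hn with heq | hlt
    · refine le_trans ?_ zero_le
      have hrank_top : Module.rank ℝ (⊤ : Submodule ℝ (EuclideanSpace ℝ (Fin M)))
          ≤ (n : Cardinal) := by
        rw [rank_top]
        have : Module.rank ℝ (EuclideanSpace ℝ (Fin M)) = (M : Cardinal) := by
          rw [← Module.finrank_eq_rank]
          norm_cast
          simp [finrank_euclideanSpace]
        rw [this, heq]
      refine le_trans (iInf_le_of_le ⊤ (iInf_le_of_le hrank_top le_rfl)) ?_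
      refine iSup₂_le fun x hx => ?_
      refine le_trans (iInf₂_le x (by trivial)) ?_
      simp
    · set v : Fin n → EuclideanSpace ℝ (Fin M) := fun k => bas M ((n+1)%2 + k) with hv_def
      have hrank : Module.rank ℝ (Submodule.span ℝ (Set.range v)) ≤ (n : Cardinal) := by
        refine le_trans (rank_span_le (R:=ℝ) (Set.range v)) ?_
        refine le_trans Cardinal.mk_range_le ?_
        simp
      refine le_trans (iInf_le_of_le (Submodule.span ℝ (Set.range v)) (iInf_le_of_le hrank le_rfl)) ?_
      refine iSup₂_le fun x hx => ?_
      obtain ⟨z, hzmem, hzle⟩ := exists_good_z M n hM hlt x hx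
      refine le_trans (iInf₂_le z hzmem) ?_
      rw [edist_dist]
      exact ENNReal.ofReal_le_ofReal (by rwa [dist_eq_norm])
  · refine le_iInf fun Z => le_iInf fun hZ => ?_
    obtain ⟨i, hi⟩ := lower_bound_aux M n hM hn Z hZ
    have hmem : EuclideanSpace.single i (1:ℝ) ∈
        {a : EuclideanSpace ℝ (Fin M) | ∑ j, |a j| ≤ 1} := by
      simp only [Set.mem_setOf_eq, EuclideanSpace.single_apply, apply_ite abs, abs_one, abs_zero]
      rw [Finset.sum_ite_eq' Finset.univ i (fun _ => (1:ℝ))]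
      simp
    refine le_trans ?_
      (le_iSup₂ (f := fun x (_ : x ∈ {a : EuclideanSpace ℝ (Fin M) | ∑ j, |a j| ≤ 1}) =>
        ⨅ z ∈ (Z : Set (EuclideanSpace ℝ (Fin M))), edist x z)
        (EuclideanSpace.single i (1:ℝ)) hmem)
    refine le_iInf fun z => le_iInf fun hz => ?_
    rw [edist_dist, dist_eq_norm]
    exact ENNReal.ofReal_le_ofReal (hi z hz)
end

section
/- Let G be a compact group acting transitively and measure-preservingly on a compact metric measure space M with invariant measure μ, and let V be a finite-dimensional G-invariant space of real-valued continuous functions on M, equipped with the L²(μ) inner product. If {v₁,…,v_m} is an orthonormal basis of V, then for every x ∈ M, ∑_{k=1}^m v_k(x)² = m / μ(M). -/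
open MeasureTheory
open Matrix

/-- If a compact group `G` acts transitively and measure-preservingly on a compact metric
measure space `M`, and `{v₁, …, v_m}` is an orthonormal basis (in `L²(μ)`) of a
finite-dimensional `G`-invariant space of real-valued continuous functions, then
`∑_{k=1}^m v_k(x)² = m / μ(M)` for every `x ∈ M`. -/
theorem stmt14 {G M : Type*} [Group G] [TopologicalSpace G] [CompactSpace G]
    [MetricSpace M] [CompactSpace M] [MeasurableSpace M] [BorelSpace M]
    [MulAction G M] [MulAction.IsPretransitive G M]
    (μ : Measure M) [IsFiniteMeasure μ] (hμ : μ Set.univ ≠ 0)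
    (hinv : ∀ g : G, MeasurePreserving (fun x : M => g • x) μ μ)
    (m : ℕ) (v : Fin m → M → ℝ) (hcont : ∀ k, Continuous (v k))
    (hON : ∀ k l, ∫ x, v k x * v l x ∂μ = if k = l then 1 else 0)
    (hVinv : ∀ (g : G) (k : Fin m),
      (fun x : M => v k (g⁻¹ • x)) ∈ Submodule.span ℝ (Set.range v)) :
    ∀ x : M, ∑ k, (v k x) ^ 2 = (m : ℝ) / (μ Set.univ).toReal := by
  -- integrability of products
  have hint : ∀ f gf : M → ℝ, Continuous f → Continuous gf →
      Integrable (fun x => f x * gf x) μ := fun f gf hf hg =>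
    (hf.mul hg).integrable_of_hasCompactSupport (HasCompactSupport.of_compactSpace _)
  -- measurable equivalence for each g
  have key : ∀ (g : G) (x : M), ∑ k, (v k (g⁻¹ • x)) ^ 2 = ∑ k, (v k x) ^ 2 := by
    intro g x
    choose A hA using fun k => (Submodule.mem_span_range_iff_exists_fun ℝ).1 (hVinv g k)
    have hA' : ∀ k y, v k (g⁻¹ • y) = ∑ l, A k l * v l y := by
      intro k y
      have := congrFun (hA k) y
      simpa [smul_eq_mul] using this.symm
    -- change of variables
    let e : M ≃ᵐ M :=
      { toFun := fun y => g⁻¹ • y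
        invFun := fun y => g • y
        left_inv := fun y => by simp
        right_inv := fun y => by simp
        measurable_toFun := (hinv g⁻¹).measurable
        measurable_invFun := (hinv g).measurable }
    have hcov : ∀ k l : Fin m,
        ∫ y, v k (g⁻¹ • y) * v l (g⁻¹ • y) ∂μ = if k = l then 1 else 0 := by
      intro k l
      rw [show (fun y => v k (g⁻¹ • y) * v l (g⁻¹ • y))
            = (fun z => v k z * v l z) ∘ (fun y => g⁻¹ • y) from rfl]
      exact (MeasurePreserving.integral_comp (hinv g⁻¹)
        e.measurableEmbedding (fun z => v k z * v l z)).trans (hON k l)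
    -- orthogonality of A: ∑ l, A k l * A k' l = δ
    have hAAt : ∀ k k' : Fin m, ∑ l, A k l * A k' l = if k = k' then 1 else 0 := by
      intro k k'
      have := hcov k k'
      have heq : ∀ y, v k (g⁻¹ • y) * v k' (g⁻¹ • y)
          = ∑ l, ∑ l', (A k l * A k' l') * (v l y * v l' y) := by
        intro y
        rw [hA' k y, hA' k' y, Finset.sum_mul_sum]
        congr 1; ext l; congr 1; ext l'; ring
      rw [show (fun y => v k (g⁻¹ • y) * v k' (g⁻¹ • y))
            = fun y => ∑ l, ∑ l', (A k l * A k' l') * (v l y * v l' y)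
            from funext heq] at this
      rw [integral_finset_sum] at this
      · simp_rw [integral_finset_sum _ (fun l' _ =>
          ((hint _ _ (hcont _) (hcont _)).const_mul _)), integral_const_mul, hON] at this
        rw [← this]
        congr 1; ext l
        rw [Finset.sum_eq_single l]
        · simp
        · intro l' _ hl'; simp [Ne.symm hl']
        · intro h; exact absurd (Finset.mem_univ l) h
      · intro l _
        exact integrable_finset_sum _ (fun l' _ =>
          ((hint _ _ (hcont _) (hcont _)).const_mul _))
    -- now matrix argument: A * Aᵀ = 1 ⟹ Aᵀ * A = 1
    have hMat : (Matrix.of A) * (Matrix.of A)ᵀ = 1 := by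
      ext k k'
      simp [Matrix.mul_apply, Matrix.one_apply, hAAt k k']
    have hMat' : (Matrix.of A)ᵀ * (Matrix.of A) = 1 := mul_eq_one_comm.1 hMat
    have hAtA : ∀ l l' : Fin m, ∑ k, A k l * A k l' = if l = l' then 1 else 0 := by
      intro l l'
      have := congrFun (congrFun hMat' l) l'
      simpa [Matrix.mul_apply, Matrix.one_apply, mul_comm] using this
    -- conclude
    calc ∑ k, (v k (g⁻¹ • x)) ^ 2
        = ∑ k, ∑ l, ∑ l', (A k l * A k l') * (v l x * v l' x) := by
          refine Finset.sum_congr rfl fun k _ => ?_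
          rw [hA' k x, sq, Finset.sum_mul_sum]
          congr 1; ext l; congr 1; ext l'; ring
      _ = ∑ l, ∑ l', (∑ k, A k l * A k l') * (v l x * v l' x) := by
          rw [Finset.sum_comm]
          refine Finset.sum_congr rfl fun l _ => ?_
          rw [Finset.sum_comm]
          refine Finset.sum_congr rfl fun l' _ => ?_
          rw [Finset.sum_mul]
      _ = ∑ l, (v l x) ^ 2 := by
          refine Finset.sum_congr rfl fun l _ => ?_
          rw [Finset.sum_eq_single l]
          · simp [hAtA l l, sq]
          · intro l' _ hl'; simp [hAtA l l', Ne.symm hl']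
          · intro h; exact absurd (Finset.mem_univ l) h
  -- Z is constant
  have hconst : ∀ x y : M, ∑ k, (v k x) ^ 2 = ∑ k, (v k y) ^ 2 := by
    intro x y
    obtain ⟨g, hg⟩ := MulAction.exists_smul_eq G y x
    have := key g y
    rw [← hg]
    simpa using (key g (g • y)).symm.trans (by simp)
  intro x
  set c := ∑ k, (v k x) ^ 2 with hc
  have hZint : ∫ y, ∑ k, (v k y) ^ 2 ∂μ = (m : ℝ) := by
    rw [integral_finset_sum _ (fun k _ => by
      simpa [sq] using hint _ _ (hcont k) (hcont k))]
    simp_rw [sq]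
    simp [hON]
  have hZc : ∫ y, ∑ k, (v k y) ^ 2 ∂μ = c * (μ Set.univ).toReal := by
    rw [show (fun y => ∑ k, (v k y) ^ 2) = fun _ => c from funext fun y => hconst y x]
    rw [integral_const, smul_eq_mul, mul_comm]
    rfl
  have hne : (μ Set.univ).toReal ≠ 0 :=
    ENNReal.toReal_ne_zero.2 ⟨hμ, measure_ne_top μ _⟩
  have : c * (μ Set.univ).toReal = (m : ℝ) := by rw [← hZc, hZint]
  field_simp [← this]
  exact this
end
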